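/- Let p be an irreducible element of degree 64 in the carry-less ring. The family CLNH composed with reduction mod p, namely s ↦ CLNH_k(s) mod p, indexed by uniformly random 64-bit keys k_1, ..., k_l, is XOR-universal over pairs of equal-length strings of l 64-bit words (l even): for distinct equal-length inputs s, s' and any 64-bit constant c, P(CLNH_k(s) mod p = (CLNH_k(s') mod p) ⊕ c) ≤ 1/2^{64}. -/

import Mathlib

open Classical in
noncomputable def prob {K : Type*} [Fintype K] (P : K → Prop) : ℝ :=
  ((Finset.univ.filter P).card : ℝ) / (Fintype.card K)

/-- Carry-less multiplication: `(a ⋆ b)ᵢ = ⨁ₖ a_{i-k} bₖ`. -/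
def clmul : ℕ → ℕ → ℕ
  | 0, _ => 0
  | a + 1, b => (if (a + 1) % 2 = 1 then b else 0) ^^^ 2 * clmul ((a + 1) / 2) b
termination_by a _ => a
decreasing_by simp_wf; omega

/-- CLNH: XOR over i of (s_{2i-1} ⊕ k_{2i-1}) ⋆ (s_{2i} ⊕ k_{2i}). -/
def clnh (n : ℕ) (k s : Fin (2 * n) → ℕ) : ℕ :=
  (List.ofFn fun i : Fin n =>
    clmul (s ⟨2 * i.1, by have := i.2; omega⟩ ^^^ k ⟨2 * i.1, by have := i.2; omega⟩)
      (s ⟨2 * i.1 + 1, by have := i.2; omega⟩ ^^^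
        k ⟨2 * i.1 + 1, by have := i.2; omega⟩)).foldr (· ^^^ ·) 0

noncomputable def toPoly (n : ℕ) : Polynomial (ZMod 2) :=
  ∑ i ∈ Finset.range n.size, if n.testBit i then Polynomial.X ^ i else 0

lemma toPoly_coeff (n i : ℕ) : (toPoly n).coeff i = if n.testBit i then 1 else 0 := by
  unfold toPoly
  rw [Polynomial.finset_sum_coeff]
  rcases lt_or_ge i n.size with h | h
  · rw [Finset.sum_eq_single i]
    · split <;> simp [Polynomial.coeff_X_pow]
    · intro b _ hb
      split <;> simp [Polynomial.coeff_X_pow, Ne.symm hb]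
    · intro hi; exact absurd (Finset.mem_range.2 h) hi
  · have hb : n.testBit i = false := Nat.testBit_lt_two_pow
      (lt_of_lt_of_le (Nat.lt_size_self n) (Nat.pow_le_pow_right (by norm_num) h))
    rw [hb]
    simp only [Bool.false_eq_true, if_false]
    apply Finset.sum_eq_zero
    intro b hb'
    have hbi : b ≠ i := by have := Finset.mem_range.1 hb'; omega
    split <;> simp [Polynomial.coeff_X_pow, Ne.symm hbi]

lemma toPoly_inj {a b : ℕ} (h : toPoly a = toPoly b) : a = b := by
  apply Nat.eq_of_testBit_eq
  intro i
  have h2 := congrArg (fun f => Polynomial.coeff f i) h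
  simp only [toPoly_coeff] at h2
  cases ha : a.testBit i <;> cases hb : b.testBit i <;> simp_all

@[simp] lemma toPoly_zero : toPoly 0 = 0 := by
  ext i; simp [toPoly_coeff]

@[simp] lemma toPoly_one : toPoly 1 = 1 := by
  ext i
  rw [toPoly_coeff, Polynomial.coeff_one]
  rcases i with _ | i <;> simp [Nat.testBit_succ]

lemma toPoly_xor (a b : ℕ) : toPoly (a ^^^ b) = toPoly a + toPoly b := by
  ext i
  rw [Polynomial.coeff_add, toPoly_coeff, toPoly_coeff, toPoly_coeff, Nat.testBit_xor]
  cases a.testBit i <;> cases b.testBit i <;> rfl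

lemma toPoly_two_pow (m : ℕ) : toPoly (2 ^ m) = Polynomial.X ^ m := by
  ext i
  rw [toPoly_coeff, Nat.testBit_two_pow, Polynomial.coeff_X_pow]
  by_cases h : m = i <;> simp [h, Ne.symm]

lemma toPoly_div2 (m : ℕ) :
    toPoly m = Polynomial.C (if m % 2 = 1 then 1 else 0) + Polynomial.X * toPoly (m / 2) := by
  ext i
  rcases i with _ | i
  · rw [toPoly_coeff, Polynomial.coeff_add, Polynomial.coeff_C, Polynomial.mul_coeff_zero,
      Nat.testBit_zero]
    by_cases h : m % 2 = 1 <;> simp [h]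
  · rw [toPoly_coeff, Polynomial.coeff_add, Polynomial.coeff_C, Polynomial.coeff_X_mul,
      toPoly_coeff, Nat.testBit_succ]
    simp

lemma toPoly_two_mul (m : ℕ) : toPoly (2 * m) = Polynomial.X * toPoly m := by
  rw [toPoly_div2 (2 * m)]
  simp [Nat.mul_div_cancel_left, Nat.mul_mod_right]

lemma toPoly_clmul (a b : ℕ) : toPoly (clmul a b) = toPoly a * toPoly b := by
  induction a using Nat.strong_induction_on with
  | _ a ih =>
    match a with
    | 0 => simp [clmul]
    | a + 1 =>
      rw [clmul]
      rw [toPoly_xor, toPoly_two_mul, ih ((a+1)/2) (by omega)]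
      rw [toPoly_div2 (a+1)]
      by_cases h : (a + 1) % 2 = 1 <;> simp [h] <;> ring

lemma toPoly_surj (f : Polynomial (ZMod 2)) : ∃ n, toPoly n = f := by
  induction f using Polynomial.induction_on' with
  | add p q hp hq =>
    obtain ⟨a, ha⟩ := hp; obtain ⟨b, hb⟩ := hq
    exact ⟨a ^^^ b, by rw [toPoly_xor, ha, hb]⟩
  | monomial i c =>
    match c with
    | 0 => exact ⟨0, by simp⟩
    | 1 => exact ⟨2 ^ i, by rw [toPoly_two_pow, Polynomial.X_pow_eq_monomial]⟩

lemma toPoly_degree_lt {m x : ℕ} (h : x < 2 ^ m) : (toPoly x).degree < m := by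
  apply Polynomial.degree_lt_iff_coeff_zero _ _ |>.2
  intro i hi
  rw [toPoly_coeff]
  have : x.testBit i = false := by
    apply Nat.testBit_lt_two_pow
    calc x < 2 ^ m := h
    _ ≤ 2 ^ i := Nat.pow_le_pow_right (by norm_num) (by exact_mod_cast Nat.cast_le.1 hi)
  simp [this]

lemma toPoly_p_degree {p : ℕ} (h1 : 2 ^ 64 ≤ p) (h2 : p < 2 ^ 65) :
    (toPoly p).degree = 64 := by
  have hc : (toPoly p).coeff 64 = 1 := by
    rw [toPoly_coeff]
    have : p.testBit 64 = true := by
      have : p / 2 ^ 64 = 1 := by omega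
      simp only [Nat.testBit, Nat.shiftRight_eq_div_pow]
      norm_num at this ⊢
      omega
    simp [this]
  have hle : (toPoly p).degree < 65 := toPoly_degree_lt h2
  have hne : (toPoly p).coeff 64 ≠ 0 := by rw [hc]; exact one_ne_zero
  have h64 : (64 : WithBot ℕ) ≤ (toPoly p).degree := Polynomial.le_degree_of_ne_zero hne
  have := lt_of_le_of_lt h64 hle
  rcases hd : (toPoly p).degree with _ | d
  · rw [hd] at h64; exact absurd h64 (by exact WithBot.not_coe_le_bot (64 : ℕ))
  · rw [hd] at hle h64
    have hd1 : d < 65 := by exact_mod_cast (WithBot.coe_lt_coe.1 hle)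
    have hd2 : 64 ≤ d := by exact_mod_cast (WithBot.coe_le_coe.1 h64)
    have hdd : d = 64 := by omega
    rw [hdd]; rfl

lemma poly_two_eq_zero : (2 : Polynomial (ZMod 2)) = 0 := by
  have h : (2 : Polynomial (ZMod 2)) = Polynomial.C 2 := by
    rw [map_ofNat]
  rw [h, show (2 : ZMod 2) = 0 from rfl, map_zero]

lemma add_self_zero (x : Polynomial (ZMod 2)) : x + x = 0 := by
  have := poly_two_eq_zero
  linear_combination x * this

lemma clk_add_eq_zero_iff {x y : Polynomial (ZMod 2)} : x + y = 0 ↔ x = y := by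
  constructor
  · intro h
    have := add_self_zero y
    linear_combination h - this
  · intro h; rw [h]; exact add_self_zero y

lemma toPoly_p_prime {p : ℕ} (h1 : 2 ^ 64 ≤ p) (h2 : p < 2 ^ 65)
    (hirr : ∀ a b : ℕ, clmul a b = p → a = 1 ∨ b = 1) : Prime (toPoly p) := by
  have hdeg := toPoly_p_degree h1 h2
  have hirr' : Irreducible (toPoly p) := by
    constructor
    · intro hu
      have := Polynomial.degree_eq_zero_of_isUnit hu
      rw [hdeg] at this
      exact absurd this (by exact of_decide_eq_false rfl)
    · intro f g hfg
      obtain ⟨a, ha⟩ := toPoly_surj f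
      obtain ⟨b, hb⟩ := toPoly_surj g
      have : toPoly (clmul a b) = toPoly p := by
        rw [toPoly_clmul, ha, hb, ← hfg]
      have hab := toPoly_inj this
      rcases hirr a b hab with h | h
      · left; rw [← ha, h, toPoly_one]; exact isUnit_one
      · right; rw [← hb, h, toPoly_one]; exact isUnit_one
  exact hirr'.prime

def idx0 {n : ℕ} (i : Fin n) : Fin (2 * n) := ⟨2 * i.1, by have := i.2; omega⟩
def idx1 {n : ℕ} (i : Fin n) : Fin (2 * n) := ⟨2 * i.1 + 1, by have := i.2; omega⟩

lemma foldr_xor_toPoly (L : List ℕ) :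
    toPoly (L.foldr (· ^^^ ·) 0) = (L.map toPoly).sum := by
  induction L with
  | nil => simp
  | cons a L ih => simp [toPoly_xor, ih]

lemma toPoly_clnh (n : ℕ) (k s : Fin (2 * n) → ℕ) :
    toPoly (clnh n k s) = ∑ i : Fin n,
      (toPoly (s (idx0 i)) + toPoly (k (idx0 i))) *
        (toPoly (s (idx1 i)) + toPoly (k (idx1 i))) := by
  unfold clnh
  rw [foldr_xor_toPoly, List.map_ofFn, List.sum_ofFn]
  apply Finset.sum_congr rfl
  intro i _
  simp only [Function.comp_apply, toPoly_clmul, toPoly_xor]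
  rfl

open Classical in
lemma prob_le {m q : ℕ} (hq : 0 < q) (E : (Fin m → Fin q) → Prop) (j : Fin m)
    (huniq : ∀ k k', (∀ i, i ≠ j → k i = k' i) → E k → E k' → k = k') :
    prob E ≤ 1 / (q : ℝ) := by
  have hcard : ((Finset.univ.filter E).card) * q ≤ q ^ m := by
    have hle : ((Finset.univ.filter E) ×ˢ (Finset.univ : Finset (Fin q))).card ≤
        (Finset.univ : Finset (Fin m → Fin q)).card := by
      apply Finset.card_le_card_of_injOn (fun kv => Function.update kv.1 j kv.2)
      · intro _ _; exact Finset.mem_univ _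
      · rintro ⟨k, v⟩ hk ⟨k', v'⟩ hk' heq
        simp only [Finset.mem_coe, Finset.mem_product, Finset.mem_filter] at hk hk'
        have hv : v = v' := by
          have := congrFun heq j
          simpa [Function.update_self] using this
        have hkk : k = k' := by
          apply huniq k k' _ hk.1.2 hk'.1.2
          intro i hi
          have := congrFun heq i
          simpa [Function.update_of_ne hi] using this
        simp [hv, hkk]
    rw [Finset.card_product, Finset.card_univ, Finset.card_univ, Fintype.card_fin,
      Fintype.card_fun, Fintype.card_fin, Fintype.card_fin] at hle
    exact hle
  unfold prob
  rw [Fintype.card_fun, Fintype.card_fin, Fintype.card_fin]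
  push_cast
  have hq' : (0:ℝ) < (q:ℝ) ^ m := by positivity
  rw [div_le_div_iff₀ hq' (by positivity)]
  calc ((Finset.univ.filter E).card : ℝ) * q ≤ ((q:ℝ)^m) := by exact_mod_cast hcard
  _ = 1 * (q:ℝ)^m := by ring

/-- CLNH followed by reduction modulo an irreducible p of degree 64 is
XOR-universal over equal-length strings of 2n 64-bit words. -/
theorem stmt16 (n : ℕ) (p : ℕ) (hpdeg : 2 ^ 64 ≤ p) (hpdeg' : p < 2 ^ 65)
    (hirr : ∀ a b : ℕ, clmul a b = p → a = 1 ∨ b = 1)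
    (cldiv clmod : ℕ → ℕ → ℕ)
    (hchar : ∀ a b : ℕ, b ≠ 0 →
      a = clmul (cldiv a b) b ^^^ clmod a b ∧ clmod a b < 2 ^ Nat.log2 b) :
    ∀ c < 2 ^ 64, ∀ s s' : Fin (2 * n) → Fin (2 ^ 64), s ≠ s' →
      prob (fun k : Fin (2 * n) → Fin (2 ^ 64) =>
        clmod (clnh n (fun i => (k i : ℕ)) (fun i => (s i : ℕ))) p =
          clmod (clnh n (fun i => (k i : ℕ)) (fun i => (s' i : ℕ))) p ^^^ c)
        ≤ 1 / 2 ^ 64 := by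
  intro c hc s s' hss
  have hp0 : p ≠ 0 := (lt_of_lt_of_le (Nat.two_pow_pos 64) hpdeg).ne'
  have hprime := toPoly_p_prime hpdeg hpdeg' hirr
  have hπdeg := toPoly_p_degree hpdeg hpdeg'
  obtain ⟨t, ht⟩ := Function.ne_iff.1 hss
  have ht2 : t.1 < 2 * n := t.2
  set j : Fin (2 * n) := ⟨if t.1 % 2 = 0 then t.1 + 1 else t.1 - 1,
    by split <;> omega⟩ with hj
  have hjval : (j : ℕ) = if t.1 % 2 = 0 then t.1 + 1 else t.1 - 1 := rfl
  have hjd : ((j : ℕ) = t.1 + 1 ∧ t.1 % 2 = 0) ∨ ((j : ℕ) = t.1 - 1 ∧ t.1 % 2 ≠ 0) := by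
    by_cases h : t.1 % 2 = 0
    · exact Or.inl ⟨by rw [hjval, if_pos h], h⟩
    · exact Or.inr ⟨by rw [hjval, if_neg h], h⟩
  have hmod : ∀ a : ℕ, toPoly p ∣ toPoly a + toPoly (clmod a p) := by
    intro a
    obtain ⟨heq, _⟩ := hchar a p hp0
    have h1 : toPoly a = toPoly (cldiv a p) * toPoly p + toPoly (clmod a p) := by
      conv_lhs => rw [heq]
      rw [toPoly_xor, toPoly_clmul]
    exact ⟨toPoly (cldiv a p), by
      linear_combination h1 + add_self_zero (toPoly (clmod a p))⟩
  have hdegsmall : ∀ a b : Fin (2 ^ 64),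
      (toPoly (a : ℕ) + toPoly (b : ℕ)).degree < (64 : ℕ) := fun a b =>
    lt_of_le_of_lt (Polynomial.degree_add_le _ _)
      (max_lt (toPoly_degree_lt a.2) (toPoly_degree_lt b.2))
  refine le_trans (prob_le (Nat.two_pow_pos 64) _ j ?_) (by norm_num)
  intro k k' hoff hEk hEk'
  funext i
  by_cases hij : i = j
  swap
  · exact hoff i hij
  subst hij
  -- notation
  have hr_k := congrArg toPoly hEk
  have hr_k' := congrArg toPoly hEk'
  rw [toPoly_xor] at hr_k hr_k'
  set Nk := clnh n (fun i => ((k i : ℕ))) (fun i => ((s i : ℕ))) with hNk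
  set N'k := clnh n (fun i => ((k i : ℕ))) (fun i => ((s' i : ℕ))) with hN'k
  set Nk' := clnh n (fun i => ((k' i : ℕ))) (fun i => ((s i : ℕ))) with hNk'
  set N'k' := clnh n (fun i => ((k' i : ℕ))) (fun i => ((s' i : ℕ))) with hN'k'
  have hd1 : toPoly p ∣ toPoly Nk + toPoly N'k + toPoly c := by
    have hd := dvd_add (hmod Nk) (hmod N'k)
    have he : toPoly Nk + toPoly (clmod Nk p) + (toPoly N'k + toPoly (clmod N'k p)) =
        toPoly Nk + toPoly N'k + toPoly c := by
      linear_combination hr_k + add_self_zero (toPoly (clmod N'k p))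
    rwa [he] at hd
  have hd2 : toPoly p ∣ toPoly Nk' + toPoly N'k' + toPoly c := by
    have hd := dvd_add (hmod Nk') (hmod N'k')
    have he : toPoly Nk' + toPoly (clmod Nk' p) + (toPoly N'k' + toPoly (clmod N'k' p)) =
        toPoly Nk' + toPoly N'k' + toPoly c := by
      linear_combination hr_k' + add_self_zero (toPoly (clmod N'k' p))
    rwa [he] at hd
  have hd3 : toPoly p ∣ (toPoly Nk + toPoly N'k) + (toPoly Nk' + toPoly N'k') := by
    have hd := dvd_add hd1 hd2
    have he : toPoly Nk + toPoly N'k + toPoly c + (toPoly Nk' + toPoly N'k' + toPoly c) =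
        (toPoly Nk + toPoly N'k) + (toPoly Nk' + toPoly N'k') := by
      linear_combination add_self_zero (toPoly c)
    rwa [he] at hd
  have hkey : (toPoly Nk + toPoly N'k) + (toPoly Nk' + toPoly N'k') =
      (toPoly ((k j : ℕ)) + toPoly ((k' j : ℕ))) *
        (toPoly ((s t : ℕ)) + toPoly ((s' t : ℕ))) := by
    rw [hNk, hN'k, hNk', hN'k']
    simp only [toPoly_clnh]
    rw [← Finset.sum_add_distrib, ← Finset.sum_add_distrib, ← Finset.sum_add_distrib]
    have hn0 : t.1 / 2 < n := by omega
    set i0 : Fin n := ⟨t.1 / 2, hn0⟩ with hi0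
    rw [Finset.sum_eq_single i0]
    · have hktt : k t = k' t := hoff t (Fin.ne_of_val_ne (by omega))
      rcases hjd with ⟨hj1, hpar⟩ | ⟨hj1, hpar⟩
      · -- t even : idx0 i0 = t, idx1 i0 = j
        have e0 : idx0 i0 = t := Fin.ext (by show 2 * (t.1 / 2) = t.1; omega)
        have e1 : idx1 i0 = j := Fin.ext (by show 2 * (t.1 / 2) + 1 = (j : ℕ); omega)
        rw [e0, e1, hktt]
        linear_combination (toPoly ((k' t : ℕ)) * (toPoly ((k j : ℕ)) + toPoly ((k' j : ℕ))) +
          toPoly ((s j : ℕ)) * (toPoly ((s t : ℕ)) + toPoly ((k' t : ℕ))) +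
          toPoly ((s' j : ℕ)) * (toPoly ((s' t : ℕ)) + toPoly ((k' t : ℕ)))) * poly_two_eq_zero
      · -- t odd : idx1 i0 = t, idx0 i0 = j
        have e0 : idx0 i0 = j := Fin.ext (by show 2 * (t.1 / 2) = (j : ℕ); omega)
        have e1 : idx1 i0 = t := Fin.ext (by show 2 * (t.1 / 2) + 1 = t.1; omega)
        rw [e0, e1, hktt]
        linear_combination (toPoly ((k' t : ℕ)) * (toPoly ((k j : ℕ)) + toPoly ((k' j : ℕ))) +
          toPoly ((s j : ℕ)) * (toPoly ((s t : ℕ)) + toPoly ((k' t : ℕ))) +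
          toPoly ((s' j : ℕ)) * (toPoly ((s' t : ℕ)) + toPoly ((k' t : ℕ)))) * poly_two_eq_zero
    · intro i _ hii
      have hii' : i.1 ≠ t.1 / 2 := fun h => hii (Fin.ext (by rw [h]))
      have e0 : k (idx0 i) = k' (idx0 i) := hoff _ (Fin.ne_of_val_ne (by
        show 2 * i.1 ≠ (j : ℕ); omega))
      have e1 : k (idx1 i) = k' (idx1 i) := hoff _ (Fin.ne_of_val_ne (by
        show 2 * i.1 + 1 ≠ (j : ℕ); omega))
      rw [e0, e1]
      exact add_self_zero _
    · intro h; exact absurd (Finset.mem_univ i0) h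
  rw [hkey] at hd3
  have hStne : toPoly ((s t : ℕ)) + toPoly ((s' t : ℕ)) ≠ 0 := fun h =>
    ht (Fin.val_injective (toPoly_inj (clk_add_eq_zero_iff.1 h)))
  rcases hprime.2.2 _ _ hd3 with h | h
  · have hz : toPoly ((k j : ℕ)) + toPoly ((k' j : ℕ)) = 0 := by
      by_contra hne
      have hd := Polynomial.degree_le_of_dvd h hne
      rw [hπdeg] at hd
      exact absurd (lt_of_le_of_lt hd (hdegsmall _ _)) (lt_irrefl _)
    exact Fin.val_injective (toPoly_inj (clk_add_eq_zero_iff.1 hz))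
  · have hd := Polynomial.degree_le_of_dvd h hStne
    rw [hπdeg] at hd
    exact absurd (lt_of_le_of_lt hd (hdegsmall _ _)) (lt_irrefl _)
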